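/- Let n ≥ 1, let q, c ∈ ℂ with q ≠ 1, put μ = (1 − c)/(1 − q), let e₁, e₂, e₃ ∈ ℂ, and let A₁, A₂, A₃ be n×n complex matrices. Let G₁, G₂, G₃ ∈ M_{3n}(ℂ) be the block matrices whose (i,j)-block is c·A_j + δ_{ij}·μ·I_n in the i-th block row and zero elsewhere. Then for every x ∈ ℂ with x + e_i ≠ 0 and cx + e_i ≠ 0 for i = 1, 2, 3: det( I_{3n} − (1−q)·x·Σ_{i=1}^3 (x + e_i)⁻¹ G_i ) = ∏_{i=1}^3 ((cx + e_i)/(x + e_i))ⁿ · det( I_n − (1−q)·c·x·Σ_{i=1}^3 (cx + e_i)⁻¹ A_i ). -/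

import Mathlib

/-- Determinant identity for the `q`-convolution:
`det(I₃ₙ − (1−q)xΣᵢ Gᵢ/(x + eᵢ))
  = ∏ᵢ ((cx + eᵢ)/(x + eᵢ))ⁿ · det(Iₙ − (1−q)cxΣᵢ Aᵢ/(cx + eᵢ))`. -/
theorem det_convolution (n : ℕ) (hn : 1 ≤ n) (q c : ℂ) (hq : q ≠ 1)
    (e : Fin 3 → ℂ) (A : Fin 3 → Matrix (Fin n) (Fin n) ℂ)
    (G : Fin 3 → Matrix (Fin 3 × Fin n) (Fin 3 × Fin n) ℂ)
    (hG : ∀ i, G i = Matrix.of fun p r : Fin 3 × Fin n =>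
      if p.1 = i then
        c * (A r.1) p.2 r.2 + (if r.1 = i ∧ p.2 = r.2 then (1 - c) / (1 - q) else 0)
      else 0)
    (x : ℂ) (hx1 : ∀ i, x + e i ≠ 0) (hx2 : ∀ i, c * x + e i ≠ 0) :
    ((1 : Matrix (Fin 3 × Fin n) (Fin 3 × Fin n) ℂ)
        - ((1 - q) * x) • ∑ i, (x + e i)⁻¹ • G i).det =
      (∏ i, ((c * x + e i) / (x + e i)) ^ n) *
        ((1 : Matrix (Fin n) (Fin n) ℂ)
          - ((1 - q) * c * x) • ∑ i, (c * x + e i)⁻¹ • A i).det := by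
  have hq' : (1 : ℂ) - q ≠ 0 := sub_ne_zero.mpr (Ne.symm hq)
  set d : Fin 3 → ℂ := fun i => (c * x + e i) / (x + e i) with hd
  set D : Matrix (Fin 3 × Fin n) (Fin 3 × Fin n) ℂ :=
    Matrix.diagonal (fun p => d p.1) with hD
  set W : Matrix (Fin 3 × Fin n) (Fin n) ℂ :=
    Matrix.of (fun p j => if p.2 = j then -((1 - q) * c * x / (c * x + e p.1)) else 0)
    with hW
  set V : Matrix (Fin n) (Fin 3 × Fin n) ℂ :=
    Matrix.of (fun j r => (A r.1) j r.2) with hV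
  have key : ((1 : Matrix (Fin 3 × Fin n) (Fin 3 × Fin n) ℂ)
      - ((1 - q) * x) • ∑ i, (x + e i)⁻¹ • G i) = D * (1 + W * V) := by
    ext p r
    have hsum : (∑ i, (x + e i)⁻¹ • G i) p r
        = (x + e p.1)⁻¹ * ((G p.1) p r) := by
      simp only [Matrix.sum_apply, Matrix.smul_apply, smul_eq_mul]
      rw [Finset.sum_eq_single p.1]
      · intro i _ hi
        simp [hG, Ne.symm hi]
      · simp
    have hWV : (W * V) p r
        = -((1 - q) * c * x / (c * x + e p.1)) * (A r.1) p.2 r.2 := by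
      simp only [Matrix.mul_apply, hW, hV, Matrix.of_apply]
      rw [Finset.sum_eq_single p.2]
      · simp
      · intro j _ hj; simp [Ne.symm hj]
      · simp
    rw [hD, Matrix.diagonal_mul, Matrix.sub_apply, Matrix.smul_apply, hsum,
      Matrix.add_apply, hWV, hG, Matrix.of_apply, smul_eq_mul, if_pos rfl]
    have h1 := hx1 p.1
    have h2 := hx2 p.1
    by_cases hpr : p = r
    · subst hpr
      rw [Matrix.one_apply_eq, if_pos ⟨rfl, rfl⟩]
      simp only [hd]
      field_simp
      have h2' : x * c + e p.1 ≠ 0 := by rwa [mul_comm]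
      field_simp
      ring
    · rw [Matrix.one_apply_ne hpr,
        if_neg (fun h => hpr (Prod.ext h.1.symm h.2))]
      simp only [hd]
      field_simp
      have h2' : x * c + e p.1 ≠ 0 := by rwa [mul_comm]
      field_simp
      ring
    done
  rw [key, Matrix.det_mul, hD, Matrix.det_diagonal, Matrix.det_one_add_mul_comm]
  have hVW : (1 + V * W) = ((1 : Matrix (Fin n) (Fin n) ℂ)
      - ((1 - q) * c * x) • ∑ i, (c * x + e i)⁻¹ • A i) := by
    ext j k
    simp only [Matrix.add_apply, Matrix.sub_apply, Matrix.smul_apply, Matrix.sum_apply,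
      Matrix.mul_apply, hV, hW, Matrix.of_apply, smul_eq_mul, mul_ite, mul_zero]
    rw [Fintype.sum_prod_type]
    simp only [Finset.sum_ite_eq', Finset.mem_univ, if_true]
    rw [sub_eq_add_neg ((1 : Matrix (Fin n) (Fin n) ℂ) j k)]
    congr 1
    rw [Finset.mul_sum, ← Finset.sum_neg_distrib]
    apply Finset.sum_congr rfl
    intro i _
    have := hx2 i
    field_simp
  rw [hVW]
  congr 1
  rw [Fintype.prod_prod_type]
  simp [hd, Finset.prod_const, div_pow, Finset.prod_div_distrib]
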